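/- arXiv:2012.09729 — 2 statements merged into one kernel-verified Lean document; each statement's English description precedes it below -/
import Mathlib

section
/- Let μ be a compactly supported probability measure on ℝ with cdf F and quantile function F^{-1}. Then for all ρ ≥ 1 and all N ≥ 1, e_N(μ,ρ) ≤ (F^{-1}(1) − F^{-1}(0+)) / (2N)^{1/ρ}, where e_N(μ,ρ) is the minimal Wasserstein-ρ distance between μ and a uniform empirical measure on N points. -/
open MeasureTheory ProbabilityTheory Filter Set
open scoped Topology

/-- Distance from `x` to the nearest nonnegative integer. -/
noncomputable def nnd (x : ℝ) : ℝ := ⨅ j : ℕ, |x - (j : ℝ)|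

/-- Left-continuous quantile function of `μ`. -/
noncomputable def qf (μ : Measure ℝ) (u : ℝ) : ℝ := sInf {x : ℝ | u ≤ cdf μ x}

/-- Minimal Wasserstein-`ρ` distance between `μ` and empirical measures on `N` points,
expressed through the quantile formula for the Wasserstein distance on `ℝ`. -/
noncomputable def eN (μ : Measure ℝ) (ρ : ℝ) (N : ℕ) : ℝ :=
  sInf ((fun x : Fin N → ℝ =>
      (∑ i : Fin N,
        ∫ u in Set.Ioc ((i : ℝ) / N) (((i : ℝ) + 1) / N), |x i - qf μ u| ^ ρ) ^ (1 / ρ)) ''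
    {x : Fin N → ℝ | Monotone x})

private lemma aux_rpow_lin {t R ρ : ℝ} (hρ : 1 ≤ ρ) (ht : 0 ≤ t) (htR : t ≤ R) :
    t ^ ρ ≤ R ^ (ρ - 1) * t := by
  rcases eq_or_lt_of_le ht with h | h
  · rw [← h, Real.zero_rpow (by linarith), mul_zero]
  · have h1 : t ^ ρ = t ^ (ρ - 1) * t := by
      nth_rewrite 1 [show ρ = ρ - 1 + 1 by ring]
      exact Real.rpow_add_one (ne_of_gt h) _
    rw [h1]
    exact mul_le_mul_of_nonneg_right
      (Real.rpow_le_rpow ht htR (by linarith)) ht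

private lemma aux_int_Ioc_le {f : ℝ → ℝ} {p q C : ℝ} (hpq : p ≤ q)
    (hint : IntegrableOn f (Ioc p q)) (h : ∀ u ∈ Ioc p q, f u ≤ C) :
    ∫ u in Ioc p q, f u ≤ C * (q - p) := by
  have h2 := setIntegral_mono_on hint
    (integrableOn_const (by rw [Real.volume_Ioc]; exact ENNReal.ofReal_ne_top))
    measurableSet_Ioc h
  rw [setIntegral_const, measureReal_def, Real.volume_Ioc, ENNReal.toReal_ofReal (by linarith),
    smul_eq_mul] at h2
  linarith

private lemma aux_int_Ioo_le {f : ℝ → ℝ} {p q C : ℝ} (hpq : p ≤ q)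
    (hint : IntegrableOn f (Ioo p q)) (h : ∀ u ∈ Ioo p q, f u ≤ C) :
    ∫ u in Ioo p q, f u ≤ C * (q - p) := by
  have h2 := setIntegral_mono_on hint
    (integrableOn_const (by rw [Real.volume_Ioo]; exact ENNReal.ofReal_ne_top))
    measurableSet_Ioo h
  rw [setIntegral_const, measureReal_def, Real.volume_Ioo, ENNReal.toReal_ofReal (by linarith),
    smul_eq_mul] at h2
  linarith

private lemma aux_integrableOn {f : ℝ → ℝ} (hf : Measurable f) {C : ℝ}
    (hb : ∀ u, |f u| ≤ C) (p q : ℝ) : IntegrableOn f (Ioc p q) := by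
  refine Integrable.mono' (g := fun _ => C) (integrableOn_const ?_)
    hf.aestronglyMeasurable (ae_of_all _ fun u => by simpa [Real.norm_eq_abs] using hb u)
  rw [Real.volume_Ioc]; exact ENNReal.ofReal_ne_top

theorem stmt16 (μ : Measure ℝ) [IsProbabilityMeasure μ]
    (hcomp : ∃ K : Set ℝ, IsCompact K ∧ μ Kᶜ = 0) (ρ : ℝ) (hρ : 1 ≤ ρ) (N : ℕ)
    (hN : 1 ≤ N) :
    eN μ ρ N ≤ (Function.leftLim (qf μ) 1 - Function.rightLim (qf μ) 0) /
      (2 * (N : ℝ)) ^ (1 / ρ) := by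
  obtain ⟨K, hKc, hK0⟩ := hcomp
  obtain ⟨r0, hKr⟩ := hKc.isBounded.subset_closedBall 0
  set M : ℝ := max r0 0 with hMdef
  have hM0 : (0:ℝ) ≤ M := le_max_right _ _
  have hr0M : r0 ≤ M := le_max_left _ _
  have hKM : K ⊆ Icc (-M) M := by
    intro y hy
    have h1 := hKr hy
    rw [Real.closedBall_eq_Icc] at h1
    exact ⟨by linarith [h1.1], by linarith [h1.2]⟩
  have hρ0 : (0:ℝ) < ρ := by linarith
  have hN' : (0:ℝ) < N := by exact_mod_cast Nat.lt_of_lt_of_le Nat.zero_lt_one hN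
  -- cdf facts
  have hcdf1 : ∀ x : ℝ, M ≤ x → cdf μ x = 1 := by
    intro x hx
    rw [cdf_eq_real, measureReal_def]
    have h1 : μ (Iic x)ᶜ = 0 := by
      refine measure_mono_null ?_ hK0
      intro y hy hyK
      simp only [mem_compl_iff, mem_Iic, not_le] at hy
      exact absurd ((hKM hyK).2.trans hx) (not_le.2 hy)
    have h2 : μ (Iic x) = 1 := by
      have h3 := measure_add_measure_compl (μ := μ) (measurableSet_Iic (a := x))
      rw [h1, add_zero, measure_univ] at h3
      exact h3
    rw [h2, ENNReal.toReal_one]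
  have hcdf0 : ∀ x : ℝ, x < -M → cdf μ x = 0 := by
    intro x hx
    rw [cdf_eq_real, measureReal_def]
    have h1 : μ (Iic x) = 0 := by
      refine measure_mono_null ?_ hK0
      intro y hy hyK
      simp only [mem_Iic] at hy
      linarith [(hKM hyK).1]
    rw [h1, ENNReal.toReal_zero]
  -- quantile facts
  have hmemM : ∀ {u : ℝ}, u ≤ 1 → M ∈ {x : ℝ | u ≤ cdf μ x} := by
    intro u hu
    simp only [mem_setOf_eq, hcdf1 M le_rfl]
    exact hu
  have hlb : ∀ {u : ℝ}, 0 < u → ∀ x ∈ {x : ℝ | u ≤ cdf μ x}, -M ≤ x := by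
    intro u hu x hx
    by_contra hc
    push_neg at hc
    rw [mem_setOf_eq, hcdf0 x hc] at hx
    linarith
  have hq_le : ∀ {u : ℝ}, 0 < u → u ≤ 1 → qf μ u ≤ M := fun h0 h1 =>
    csInf_le ⟨-M, fun x hx => hlb h0 x hx⟩ (hmemM h1)
  have hq_ge : ∀ {u : ℝ}, 0 < u → u ≤ 1 → -M ≤ qf μ u := fun h0 h1 =>
    le_csInf ⟨M, hmemM h1⟩ (fun x hx => hlb h0 x hx)
  have hq_mono : ∀ u v : ℝ, 0 < u → u ≤ v → v ≤ 1 → qf μ u ≤ qf μ v := by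
    intro u v h0 huv h1
    exact csInf_le_csInf ⟨-M, fun x hx => hlb h0 x hx⟩ ⟨M, hmemM h1⟩
      (fun x hx => le_trans huv hx)
  -- monotone extension
  set G : ℝ → ℝ := fun u => if u ≤ 0 then -M else if 1 < u then M else qf μ u with hGdef
  have hGqf : ∀ u : ℝ, 0 < u → u ≤ 1 → G u = qf μ u := by
    intro u h0 h1
    simp only [hGdef, if_neg (not_le.2 h0), if_neg (not_lt.2 h1)]
  have hGlb : ∀ u, -M ≤ G u := by
    intro u
    simp only [hGdef]
    split_ifs with h1 h2
    · exact le_rfl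
    · linarith
    · exact hq_ge (not_le.1 h1) (not_lt.1 h2)
  have hGub : ∀ u, G u ≤ M := by
    intro u
    simp only [hGdef]
    split_ifs with h1 h2
    · linarith
    · exact le_rfl
    · exact hq_le (not_le.1 h1) (not_lt.1 h2)
  have hGmono : Monotone G := by
    intro u v huv
    by_cases hu0 : u ≤ 0
    · simp only [hGdef, if_pos hu0]
      exact hGlb v
    · have hv0 : ¬ v ≤ 0 := fun h => hu0 (huv.trans h)
      by_cases hu1 : 1 < u
      · have hv1 : 1 < v := lt_of_lt_of_le hu1 huv
        simp only [hGdef, if_neg hu0, if_neg hv0, if_pos hu1, if_pos hv1, le_refl]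
      · by_cases hv1 : 1 < v
        · simp only [hGdef, if_neg hu0, if_neg hv0, if_neg hu1, if_pos hv1]
          exact hq_le (not_le.1 hu0) (not_lt.1 hu1)
        · simp only [hGdef, if_neg hu0, if_neg hv0, if_neg hu1, if_neg hv1]
          exact hq_mono u v (not_le.1 hu0) huv (not_lt.1 hv1)
  have hGmeas : Measurable G := hGmono.measurable
  have hGabs : ∀ u, |G u| ≤ M := fun u => abs_le.2 ⟨by linarith [hGlb u], hGub u⟩
  -- limits
  set a : ℝ := Function.rightLim (qf μ) 0 with hadef
  set b : ℝ := Function.leftLim (qf μ) 1 with hbdef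
  have hne0 : (𝓝[>] (0:ℝ)) ≠ ⊥ := (inferInstance : (𝓝[>] (0:ℝ)).NeBot).ne
  have hne1 : (𝓝[<] (1:ℝ)) ≠ ⊥ := (inferInstance : (𝓝[<] (1:ℝ)).NeBot).ne
  have ha : a = Function.rightLim G 0 := by
    have h0 : Tendsto G (𝓝[>] (0:ℝ)) (𝓝 (Function.rightLim G 0)) := by
      rw [hGmono.rightLim_eq_sInf]
      exact hGmono.tendsto_nhdsGT 0
    have heq : qf μ =ᶠ[𝓝[>] (0:ℝ)] G := by
      filter_upwards [Ioo_mem_nhdsGT (zero_lt_one)] with u hu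
      exact (hGqf u hu.1 hu.2.le).symm
    exact rightLim_eq_of_tendsto (Filter.Tendsto.congr' heq.symm h0)
  have hb : b = Function.leftLim G 1 := by
    have h0 : Tendsto G (𝓝[<] (1:ℝ)) (𝓝 (Function.leftLim G 1)) := by
      rw [hGmono.leftLim_eq_sSup]
      exact hGmono.tendsto_nhdsLT 1
    have heq : qf μ =ᶠ[𝓝[<] (1:ℝ)] G := by
      filter_upwards [Ioo_mem_nhdsLT (zero_lt_one)] with u hu
      exact (hGqf u hu.1 hu.2.le).symm
    exact leftLim_eq_of_tendsto (Filter.Tendsto.congr' heq.symm h0)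
  have haG : ∀ u : ℝ, 0 < u → a ≤ G u := fun u hu => ha ▸ hGmono.rightLim_le hu
  have hbG : ∀ u : ℝ, u < 1 → G u ≤ b := fun u hu => hb ▸ hGmono.le_leftLim hu
  have hab : a ≤ b := (haG (1/2) one_half_pos).trans (hbG (1/2) one_half_lt_one)
  have hR : (0:ℝ) ≤ b - a := by linarith
  -- midpoints
  set mid : Fin N → ℝ := fun i => (2*(i:ℝ)+1)/(2*N) with hmiddef
  have hmid0 : ∀ i : Fin N, 0 < mid i := fun i => by
    apply div_pos (by positivity) (by positivity)
  have hmid1 : ∀ i : Fin N, mid i < 1 := by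
    intro i
    rw [hmiddef, div_lt_one (by positivity)]
    have h2 : ((i:ℕ):ℝ) + 1 ≤ (N:ℝ) := by exact_mod_cast Nat.succ_le_of_lt i.isLt
    linarith
  set x : Fin N → ℝ := fun i => G (mid i) with hxdef
  have hxmono : Monotone x := by
    intro i j hij
    apply hGmono
    have hcast : ((i:ℕ):ℝ) ≤ ((j:ℕ):ℝ) := Nat.cast_le.2 hij
    simp only [hmiddef]
    gcongr
  -- telescoping sequence
  set e : ℕ → ℝ := fun j => if j = 0 then a else if N ≤ j then b else G ((j:ℝ)/N) with hedef
  have hea : ∀ j, a ≤ e j := by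
    intro j
    simp only [hedef]
    split_ifs with h1 h2
    · exact le_rfl
    · exact hab
    · exact haG _ (div_pos (by exact_mod_cast Nat.pos_of_ne_zero h1) hN')
  have heb : ∀ j, e j ≤ b := by
    intro j
    simp only [hedef]
    split_ifs with h1 h2
    · exact hab
    · exact le_rfl
    · exact hbG _ ((div_lt_one hN').2 (by exact_mod_cast not_le.1 h2))
  have he0 : e 0 = a := by simp [hedef]
  have heN : e N = b := by
    simp only [hedef]
    rw [if_neg (by omega), if_pos le_rfl]
  -- per-interval bound
  have key : ∀ i : Fin N,
      (∫ u in Set.Ioc ((i : ℝ) / N) (((i : ℝ) + 1) / N), |x i - qf μ u| ^ ρ)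
        ≤ (b-a)^(ρ-1) * (e ((i:ℕ)+1) - e (i:ℕ)) * (1/(2*N)) := by
    intro i
    have hiN : ((i:ℕ):ℝ) + 1 ≤ N := by exact_mod_cast Nat.succ_le_of_lt i.isLt
    have hi0 : (0:ℝ) ≤ ((i:ℕ):ℝ) := Nat.cast_nonneg _
    set l : ℝ := (i : ℝ) / N with hldef
    set r : ℝ := ((i : ℝ) + 1) / N with hrdef
    have hl0 : 0 ≤ l := div_nonneg hi0 hN'.le
    have hr1 : r ≤ 1 := (div_le_one hN').2 (by linarith)
    have hlm : l < mid i := by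
      rw [hldef, hmiddef, div_lt_div_iff₀ hN' (by positivity)]
      nlinarith
    have hmr : mid i < r := by
      rw [hrdef, hmiddef, div_lt_div_iff₀ (by positivity) hN']
      nlinarith
    have hml : mid i - l = 1/(2*N) := by
      rw [hldef, hmiddef]; field_simp; ring
    have hrm : r - mid i = 1/(2*N) := by
      rw [hrdef, hmiddef]; field_simp; ring
    set f : ℝ → ℝ := fun u => |x i - G u| ^ ρ with hfdef
    have hfmeas : Measurable f :=
      (Real.continuous_rpow_const hρ0.le).measurable.comp
        ((measurable_const.sub hGmeas).abs)
    have hfb : ∀ u, |f u| ≤ (2*M)^ρ := by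
      intro u
      rw [hfdef, abs_of_nonneg (Real.rpow_nonneg (abs_nonneg _) _)]
      refine Real.rpow_le_rpow (abs_nonneg _) ?_ hρ0.le
      calc |x i - G u| ≤ |x i| + |G u| := abs_sub _ _
        _ ≤ M + M := add_le_add (hGabs _) (hGabs _)
        _ = 2*M := by ring
    have hfint : ∀ p q : ℝ, IntegrableOn f (Ioc p q) := aux_integrableOn hfmeas hfb
    have hfnn : ∀ u, 0 ≤ f u := fun u => Real.rpow_nonneg (abs_nonneg _) _
    -- replace qf by G
    have hcongr : (∫ u in Set.Ioc l r, |x i - qf μ u| ^ ρ) = ∫ u in Set.Ioc l r, f u := by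
      refine setIntegral_congr_fun measurableSet_Ioc (fun u hu => ?_)
      have hGu := hGqf u (lt_of_le_of_lt hl0 hu.1) (hu.2.trans hr1)
      show |x i - qf μ u| ^ ρ = |x i - G u| ^ ρ
      rw [hGu]
    -- e-value relations
    have heix : e (i:ℕ) ≤ x i := by
      by_cases hi : (i:ℕ) = 0
      · simp only [hedef, if_pos hi]
        exact haG _ (hmid0 i)
      · simp only [hedef, if_neg hi, if_neg (not_le.2 i.isLt)]
        apply hGmono
        calc ((i:ℕ):ℝ)/N = l := by rw [hldef]
          _ ≤ mid i := hlm.le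
    have hxie : x i ≤ e ((i:ℕ)+1) := by
      by_cases hiN1 : N ≤ (i:ℕ)+1
      · simp only [hedef, if_neg (Nat.succ_ne_zero _), if_pos hiN1]
        exact hbG _ (hmid1 i)
      · simp only [hedef, if_neg (Nat.succ_ne_zero _), if_neg hiN1]
        apply hGmono
        calc mid i ≤ r := hmr.le
          _ = (((i:ℕ)+1 : ℕ):ℝ)/N := by rw [hrdef]; push_cast; ring_nf
    have hxib : x i ≤ b := hbG _ (hmid1 i)
    have hxia : a ≤ x i := haG _ (hmid0 i)
    -- pointwise bounds
    have hpt1 : ∀ u ∈ Ioc l (mid i), f u ≤ (b-a)^(ρ-1) * (x i - e (i:ℕ)) := by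
      intro u hu
      have hu0 : 0 < u := lt_of_le_of_lt hl0 hu.1
      have hGu_le : G u ≤ x i := hGmono hu.2
      have hGu_ge : e (i:ℕ) ≤ G u := by
        by_cases hi : (i:ℕ) = 0
        · simp only [hedef, if_pos hi]
          exact haG _ hu0
        · simp only [hedef, if_neg hi, if_neg (not_le.2 i.isLt)]
          exact hGmono hu.1.le
      have habs : |x i - G u| ≤ x i - e (i:ℕ) := by
        rw [abs_of_nonneg (by linarith)]; linarith
      calc f u = |x i - G u| ^ ρ := rfl
        _ ≤ (x i - e (i:ℕ)) ^ ρ :=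
            Real.rpow_le_rpow (abs_nonneg _) habs hρ0.le
        _ ≤ (b-a)^(ρ-1) * (x i - e (i:ℕ)) :=
            aux_rpow_lin hρ (by linarith) (by linarith [hea (i:ℕ)])
    have hpt2 : ∀ u ∈ Ioo (mid i) r, f u ≤ (b-a)^(ρ-1) * (e ((i:ℕ)+1) - x i) := by
      intro u hu
      have hGu_ge : x i ≤ G u := hGmono hu.1.le
      have hGu_le : G u ≤ e ((i:ℕ)+1) := by
        by_cases hiN1 : N ≤ (i:ℕ)+1
        · simp only [hedef, if_neg (Nat.succ_ne_zero _), if_pos hiN1]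
          exact hbG _ (lt_of_lt_of_le hu.2 hr1)
        · simp only [hedef, if_neg (Nat.succ_ne_zero _), if_neg hiN1]
          apply hGmono
          calc u ≤ r := hu.2.le
            _ = (((i:ℕ)+1 : ℕ):ℝ)/N := by rw [hrdef]; push_cast; ring_nf
      have habs : |x i - G u| ≤ e ((i:ℕ)+1) - x i := by
        rw [abs_sub_comm, abs_of_nonneg (by linarith)]; linarith
      calc f u = |x i - G u| ^ ρ := rfl
        _ ≤ (e ((i:ℕ)+1) - x i) ^ ρ :=
            Real.rpow_le_rpow (abs_nonneg _) habs hρ0.le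
        _ ≤ (b-a)^(ρ-1) * (e ((i:ℕ)+1) - x i) :=
            aux_rpow_lin hρ (by linarith) (by linarith [heb ((i:ℕ)+1)])
    -- assemble
    have hIoo : (∫ u in Ioc (mid i) r, f u) = ∫ u in Ioo (mid i) r, f u :=
      integral_Ioc_eq_integral_Ioo
    rw [hcongr, ← Ioc_union_Ioc_eq_Ioc hlm.le hmr.le,
      setIntegral_union (Ioc_disjoint_Ioc_of_le le_rfl) measurableSet_Ioc (hfint _ _) (hfint _ _),
      hIoo]
    have hb1 := aux_int_Ioc_le hlm.le (hfint _ _) hpt1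
    have hb2 := aux_int_Ioo_le hmr.le ((hfint (mid i) r).mono_set Ioo_subset_Ioc_self) hpt2
    rw [hml] at hb1
    rw [hrm] at hb2
    calc (∫ u in Ioc l (mid i), f u) + ∫ u in Ioo (mid i) r, f u
        ≤ (b-a)^(ρ-1) * (x i - e (i:ℕ)) * (1/(2*N)) +
          (b-a)^(ρ-1) * (e ((i:ℕ)+1) - x i) * (1/(2*N)) := add_le_add hb1 hb2
      _ = (b-a)^(ρ-1) * (e ((i:ℕ)+1) - e (i:ℕ)) * (1/(2*N)) := by ring
  -- sum the bounds
  have hsumle : (∑ i : Fin N,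
      ∫ u in Set.Ioc ((i : ℝ) / N) (((i : ℝ) + 1) / N), |x i - qf μ u| ^ ρ)
        ≤ (b-a)^ρ / (2*N) := by
    have h1 : (∑ i : Fin N,
        ∫ u in Set.Ioc ((i : ℝ) / N) (((i : ℝ) + 1) / N), |x i - qf μ u| ^ ρ)
          ≤ ∑ i : Fin N, (b-a)^(ρ-1) * (e ((i:ℕ)+1) - e (i:ℕ)) * (1/(2*N)) :=
      Finset.sum_le_sum (fun i _ => key i)
    have h2 : ∑ i : Fin N, (b-a)^(ρ-1) * (e ((i:ℕ)+1) - e (i:ℕ)) * (1/(2*N))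
        = (b-a)^(ρ-1) * (b - a) * (1/(2*N)) := by
      rw [← Finset.sum_mul, ← Finset.mul_sum]
      congr 1
      congr 1
      rw [Fin.sum_univ_eq_sum_range (fun j => e (j+1) - e j) N, Finset.sum_range_sub e N,
        he0, heN]
    have h3 : (b-a)^(ρ-1) * (b - a) = (b-a)^ρ := by
      rcases eq_or_lt_of_le hR with h | h
      · rw [← h, Real.zero_rpow (ne_of_gt hρ0), mul_zero]
      · have h4 : (b-a)^ρ = (b-a)^(ρ-1) * (b-a) := by
          nth_rewrite 1 [show ρ = ρ - 1 + 1 by ring]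
          exact Real.rpow_add_one (ne_of_gt h) _
        rw [h4]
    rw [h2, h3] at h1
    calc _ ≤ (b-a)^ρ * (1/(2*N)) := h1
      _ = (b-a)^ρ / (2*N) := by ring
  -- conclude
  have hsum0 : (0:ℝ) ≤ ∑ i : Fin N,
      ∫ u in Set.Ioc ((i : ℝ) / N) (((i : ℝ) + 1) / N), |x i - qf μ u| ^ ρ :=
    Finset.sum_nonneg (fun i _ => integral_nonneg
      (fun u => Real.rpow_nonneg (abs_nonneg _) _))
  have hbdd : BddBelow ((fun x : Fin N → ℝ =>
      (∑ i : Fin N,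
        ∫ u in Set.Ioc ((i : ℝ) / N) (((i : ℝ) + 1) / N), |x i - qf μ u| ^ ρ) ^ (1 / ρ)) ''
    {x : Fin N → ℝ | Monotone x}) := by
    refine ⟨0, fun y hy => ?_⟩
    obtain ⟨z, _, rfl⟩ := hy
    exact Real.rpow_nonneg (Finset.sum_nonneg (fun i _ => integral_nonneg
      (fun u => Real.rpow_nonneg (abs_nonneg _) _))) _
  have hfirst : eN μ ρ N ≤ (∑ i : Fin N,
      ∫ u in Set.Ioc ((i : ℝ) / N) (((i : ℝ) + 1) / N), |x i - qf μ u| ^ ρ) ^ (1 / ρ) :=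
    csInf_le hbdd (Set.mem_image_of_mem _ hxmono)
  refine hfirst.trans ?_
  calc (∑ i : Fin N,
      ∫ u in Set.Ioc ((i : ℝ) / N) (((i : ℝ) + 1) / N), |x i - qf μ u| ^ ρ) ^ (1 / ρ)
      ≤ ((b-a)^ρ / (2*N)) ^ (1/ρ) := Real.rpow_le_rpow hsum0 hsumle (by positivity)
    _ = ((b-a)^ρ)^(1/ρ) / (2*N)^(1/ρ) :=
        Real.div_rpow (Real.rpow_nonneg hR _) (by positivity) _
    _ = (b-a) / (2*(N:ℝ))^(1/ρ) := by
        rw [one_div, Real.rpow_rpow_inv hR (ne_of_gt hρ0)]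
end

section
/- For ℓ an integer ≥ 2 and d ≥ 2, there exists a positive integer N ≤ ℓ^d such that for every k ∈ {1,…,d}, the distance from N·ℓ^{−k} to the nearest integer is at least (ℓ−1)/(2ℓ). -/
/-- Base-`l` number with digits alternating `l/2`, `l-1-l/2`. -/
private def ffD (l : ℕ) : ℕ → ℕ
  | 0 => 0
  | k + 1 => ffD l k + (if Even k then l / 2 else l - 1 - l / 2) * l ^ k

private lemma ffD_add (l k : ℕ) (j : ℕ) : ∃ q, ffD l (k + j) = ffD l k + q * l ^ k := by
  induction j with
  | zero => exact ⟨0, by simp⟩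
  | succ j ih =>
    obtain ⟨q, hq⟩ := ih
    refine ⟨q + (if Even (k + j) then l / 2 else l - 1 - l / 2) * l ^ j, ?_⟩
    have h0 : ffD l (k + (j + 1)) = ffD l (k + j)
        + (if Even (k + j) then l / 2 else l - 1 - l / 2) * l ^ (k + j) := rfl
    rw [h0, hq, pow_add]
    ring

private lemma ffD_bounds (l : ℕ) (hl : 2 ≤ l) (m : ℕ) :
    (l - 1) * l ^ m ≤ 2 * ffD l (m + 1) ∧ 2 * ffD l (m + 1) ≤ (l + 1) * l ^ m := by
  have hLpos : 1 ≤ l ^ m := Nat.one_le_pow _ _ (by omega)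
  rcases Nat.even_or_odd l with he | ho
  · -- even case: l = 2s+2
    obtain ⟨s, hls⟩ : ∃ s, l = 2 * s + 2 := by
      obtain ⟨t, ht⟩ := he; exact ⟨t - 1, by omega⟩
    have hdiv : l / 2 = s + 1 := by omega
    have hdig : l - 1 - l / 2 = s := by omega
    have key : ∀ k, (l + 1) * (2 * ffD l k) + l
        = l ^ (k + 1) + (if Even k then 0 else 2 * l ^ k) := by
      intro k
      induction k with
      | zero => simp [ffD]
      | succ k ih =>
        by_cases hk : Even k
        · have hk1 : ¬ Even (k + 1) := by simp [Nat.even_add_one, hk]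
          rw [if_pos hk] at ih
          have h0 : ffD l (k + 1) = ffD l k + (l / 2) * l ^ k := by
            show ffD l k + (if Even k then l / 2 else l - 1 - l / 2) * l ^ k = _
            rw [if_pos hk]
          rw [if_neg hk1, h0, hdiv]
          have e1 : (l + 1) * (2 * (ffD l k + (s + 1) * l ^ k))
              = (l + 1) * (2 * ffD l k) + (l + 1) * (2 * (s + 1)) * l ^ k := by ring
          have e2 : (l + 1) * (2 * (s + 1)) * l ^ k = l ^ (k + 1 + 1) + l ^ (k + 1) := by
            subst hls; ring
          omega
        · have hk1 : Even (k + 1) := by simp [Nat.even_add_one, hk]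
          rw [if_neg hk] at ih
          have h0 : ffD l (k + 1) = ffD l k + (l - 1 - l / 2) * l ^ k := by
            show ffD l k + (if Even k then l / 2 else l - 1 - l / 2) * l ^ k = _
            rw [if_neg hk]
          rw [if_pos hk1, h0, hdig]
          have e1 : (l + 1) * (2 * (ffD l k + s * l ^ k))
              = (l + 1) * (2 * ffD l k) + (l + 1) * (2 * s) * l ^ k := by ring
          have e2 : (l + 1) * (2 * s) * l ^ k + 2 * l ^ k + l ^ (k + 1) = l ^ (k + 1 + 1) := by
            subst hls; ring
          omega
    have H := key (m + 1)
    set F := ffD l (m + 1) with hF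
    have hsub : l - 1 = 2 * s + 1 := by omega
    have eL : (l + 1) * ((l - 1) * l ^ m) + l ^ m = l * l * l ^ m := by
      rw [hsub]; subst hls; ring
    have eU : (l + 1) * ((l + 1) * l ^ m) = l * l * l ^ m + 2 * (l * l ^ m) + l ^ m := by
      ring
    have e2 : l ^ (m + 1 + 1) = l * l * l ^ m := by ring
    have e1 : l ^ (m + 1) = l * l ^ m := by ring
    have hW : l ≤ l * l ^ m := by
      calc l = l * 1 := (mul_one l).symm
      _ ≤ l * l ^ m := Nat.mul_le_mul_left l hLpos
    constructor
    · refine Nat.le_of_mul_le_mul_left ?_ (show 0 < l + 1 by omega)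
      by_cases hm : Even (m + 1)
      · rw [if_pos hm] at H
        have hm1 : 1 ≤ m := by
          rcases Nat.eq_zero_or_pos m with h | h
          · exfalso; rw [h] at hm; exact (by decide : ¬ Even 1) hm
          · exact h
        have hLl : l ≤ l ^ m := by
          calc l = l ^ 1 := (pow_one l).symm
          _ ≤ l ^ m := Nat.pow_le_pow_right (by omega) hm1
        omega
      · rw [if_neg hm] at H
        omega
    · refine Nat.le_of_mul_le_mul_left ?_ (show 0 < l + 1 by omega)
      by_cases hm : Even (m + 1)
      · rw [if_pos hm] at H; omega
      · rw [if_neg hm] at H; omega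
  · -- odd case: l = 2t+3, both digits t+1
    obtain ⟨t, hlt⟩ : ∃ t, l = 2 * t + 3 := by
      obtain ⟨u, hu⟩ := ho; exact ⟨u - 1, by omega⟩
    have hdiv : l / 2 = t + 1 := by omega
    have hdig : l - 1 - l / 2 = t + 1 := by omega
    have key : ∀ k, 2 * ffD l k + 1 = l ^ k := by
      intro k
      induction k with
      | zero => simp [ffD]
      | succ k ih =>
        have h0 : ffD l (k + 1) = ffD l k + (t + 1) * l ^ k := by
          show ffD l k + (if Even k then l / 2 else l - 1 - l / 2) * l ^ k = _
          by_cases hk : Even k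
          · rw [if_pos hk, hdiv]
          · rw [if_neg hk, hdig]
        rw [h0]
        have e1 : 2 * (ffD l k + (t + 1) * l ^ k) = 2 * ffD l k + (2 * t + 2) * l ^ k := by ring
        have e2 : (2 * t + 2) * l ^ k + l ^ k = l ^ (k + 1) := by
          subst hlt; ring
        omega
    have H := key (m + 1)
    have hsub : l - 1 = 2 * t + 2 := by omega
    have eL : (l - 1) * l ^ m + l ^ m = l * l ^ m := by rw [hsub]; subst hlt; ring
    have eU : (l + 1) * l ^ m = l * l ^ m + l ^ m := by ring
    have e1 : l ^ (m + 1) = l * l ^ m := by ring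
    omega

theorem stmt17 (l d : ℕ) (hl : 2 ≤ l) (hd : 2 ≤ d) :
    ∃ N : ℕ, 0 < N ∧ N ≤ l ^ d ∧ ∀ k : ℕ, 1 ≤ k → k ≤ d →
      ((l : ℝ) - 1) / (2 * l) ≤ ⨅ j : ℤ, |(N : ℝ) * (l : ℝ) ^ (-(k : ℤ)) - (j : ℝ)| := by
  obtain ⟨m0, hm0⟩ : ∃ m0, d = m0 + 1 := ⟨d - 1, by omega⟩
  refine ⟨ffD l d, ?_, ?_, ?_⟩
  · obtain ⟨h1, _⟩ := ffD_bounds l hl m0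
    rw [hm0]
    have h2 : 1 ≤ l ^ m0 := Nat.one_le_pow _ _ (by omega)
    have h3 : 0 < (l - 1) * l ^ m0 := Nat.mul_pos (by omega) h2
    omega
  · obtain ⟨_, h2⟩ := ffD_bounds l hl m0
    rw [hm0]
    have e1 : l ^ (m0 + 1) = l * l ^ m0 := by ring
    have : (l + 1) * l ^ m0 ≤ 2 * (l * l ^ m0) := by nlinarith [Nat.one_le_pow m0 l (by omega : 0 < l)]
    omega
  · intro k hk1 hkd
    obtain ⟨m, rfl⟩ : ∃ m, k = m + 1 := ⟨k - 1, by omega⟩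
    obtain ⟨q, hq⟩ := ffD_add l (m + 1) (d - (m + 1))
    rw [show m + 1 + (d - (m + 1)) = d from by omega] at hq
    obtain ⟨h1, h2⟩ := ffD_bounds l hl m
    have hl0 : (0:ℝ) < (l:ℝ) := by exact_mod_cast (by omega : 0 < l)
    have hLk : (0:ℝ) < (l:ℝ) ^ (m + 1) := by positivity
    have hcast1 : ((l:ℝ) - 1) * (l:ℝ) ^ m ≤ 2 * (ffD l (m + 1) : ℝ) := by
      have h' : ((l - 1 : ℕ) : ℝ) * ((l:ℝ) ^ m) ≤ 2 * (ffD l (m + 1) : ℝ) := by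
        exact_mod_cast h1
      rwa [Nat.cast_sub (by omega), Nat.cast_one] at h'
    have hcast2 : 2 * (ffD l (m + 1) : ℝ) ≤ ((l:ℝ) + 1) * (l:ℝ) ^ m := by
      exact_mod_cast h2
    set c : ℝ := ((l : ℝ) - 1) / (2 * l) with hc
    set x : ℝ := (ffD l (m + 1) : ℝ) / (l:ℝ) ^ (m + 1) with hx
    have hx1 : c ≤ x := by
      rw [hc, hx, div_le_div_iff₀ (by positivity) hLk]
      have e : ((l:ℝ)) ^ (m + 1) = l ^ m * l := by ring
      rw [e]
      nlinarith
    have hx2 : x ≤ 1 - c := by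
      have h1c : 1 - c = ((l:ℝ) + 1) / (2 * l) := by
        rw [hc]; field_simp; ring
      rw [h1c, hx, div_le_div_iff₀ hLk (by positivity)]
      have e : ((l:ℝ)) ^ (m + 1) = l ^ m * l := by ring
      rw [e]
      nlinarith
    have hval : (ffD l d : ℝ) * (l : ℝ) ^ (-((m + 1 : ℕ) : ℤ)) = (q : ℝ) + x := by
      rw [zpow_neg, zpow_natCast, hq, hx]
      push_cast
      field_simp
      ring
    apply le_ciInf
    intro j
    rw [hval]
    rcases le_or_gt j (q : ℤ) with hj | hj
    · have hjr : (j : ℝ) ≤ (q : ℝ) := by exact_mod_cast hj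
      have : c ≤ (q : ℝ) + x - (j : ℝ) := by linarith
      exact le_trans this (le_abs_self _)
    · have hjr : (q : ℝ) + 1 ≤ (j : ℝ) := by exact_mod_cast hj
      have : c ≤ -((q : ℝ) + x - (j : ℝ)) := by linarith
      exact le_trans this (neg_le_abs _)
end
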